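/- The curve CL1 defined by Q1(x,y,z) = (x^2+y^2-25z^2)(x-4z)(x+4z)(3x+4y)(x+3z)(6x+y+21z)(y+3z) has exactly 6 ordinary double points, 3 ordinary triple points, and 2 ordinary quadruple points, and no singular points of multiplicity at least 5. -/

import Mathlib

open MvPolynomial

noncomputable def conic : MvPolynomial (Fin 3) ℂ :=
  X 0 ^ 2 + X 1 ^ 2 - 25 * X 2 ^ 2

/-- The seven irreducible components of CL1: the smooth conic and six lines. -/
noncomputable def comps1 : Fin 7 → MvPolynomial (Fin 3) ℂ :=
  ![conic, X 0 - 4 * X 2, X 0 + 4 * X 2, 3 * X 0 + 4 * X 1, X 0 + 3 * X 2,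
    6 * X 0 + X 1 + 21 * X 2, X 1 + 3 * X 2]

/-- The number of components of CL1 passing through a projective point. -/
noncomputable def mult1 (p : Projectivization ℂ (Fin 3 → ℂ)) : ℕ :=
  (Finset.univ.filter fun i : Fin 7 => eval p.rep (comps1 i) = 0).card

/-- Gradient of a polynomial at a point. -/
noncomputable def grad (f : MvPolynomial (Fin 3) ℂ) (p : Fin 3 → ℂ) : Fin 3 → ℂ :=
  fun k => eval p (pderiv k f)

lemma fin3_cases (k : Fin 3) : k = 0 ∨ k = 1 ∨ k = 2 := by revert k; decide
lemma fin7_cases (i : Fin 7) : i = 0 ∨ i = 1 ∨ i = 2 ∨ i = 3 ∨ i = 4 ∨ i = 5 ∨ i = 6 := by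
  revert i; decide
lemma fin11_cases (k : Fin 11) :
    k = 0 ∨ k = 1 ∨ k = 2 ∨ k = 3 ∨ k = 4 ∨ k = 5 ∨ k = 6 ∨ k = 7 ∨ k = 8 ∨ k = 9 ∨ k = 10 := by
  revert k; decide

lemma pd_ofNat (k : Fin 3) (n : ℕ) [n.AtLeastTwo] :
    pderiv k (OfNat.ofNat n : MvPolynomial (Fin 3) ℂ) = 0 := by
  rw [← map_ofNat (C : ℂ →+* MvPolynomial (Fin 3) ℂ) n]; simp

lemma ev0 (v : Fin 3 → ℂ) : eval v (comps1 0) = v 0^2 + v 1^2 - 25*v 2^2 := by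
  rw [show comps1 0 = conic from rfl, conic]; simp
lemma ev1 (v : Fin 3 → ℂ) : eval v (comps1 1) = v 0 - 4*v 2 := by
  rw [show comps1 1 = X 0 - 4 * X 2 from rfl]; simp
lemma ev2 (v : Fin 3 → ℂ) : eval v (comps1 2) = v 0 + 4*v 2 := by
  rw [show comps1 2 = X 0 + 4 * X 2 from rfl]; simp
lemma ev3 (v : Fin 3 → ℂ) : eval v (comps1 3) = 3*v 0 + 4*v 1 := by
  rw [show comps1 3 = 3 * X 0 + 4 * X 1 from rfl]; simp
lemma ev4 (v : Fin 3 → ℂ) : eval v (comps1 4) = v 0 + 3*v 2 := by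
  rw [show comps1 4 = X 0 + 3 * X 2 from rfl]; simp
lemma ev5 (v : Fin 3 → ℂ) : eval v (comps1 5) = 6*v 0 + v 1 + 21*v 2 := by
  rw [show comps1 5 = 6 * X 0 + X 1 + 21 * X 2 from rfl]; simp
lemma ev6 (v : Fin 3 → ℂ) : eval v (comps1 6) = v 1 + 3*v 2 := by
  rw [show comps1 6 = X 1 + 3 * X 2 from rfl]; simp

lemma g0 (w : Fin 3 → ℂ) : grad (comps1 0) w = ![2 * w 0, 2 * w 1, -(50 * w 2)] := by
  funext k
  obtain rfl | rfl | rfl := fin3_cases k <;>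
    · rw [show comps1 0 = conic from rfl, conic, show (25 : MvPolynomial (Fin 3) ℂ) = C 25 from (map_ofNat C 25).symm]
      simp [grad]
      try ring

lemma g1 (w : Fin 3 → ℂ) : grad (comps1 1) w = ![1, 0, -4] := by
  funext k
  obtain rfl | rfl | rfl := fin3_cases k <;>
    · rw [show comps1 1 = X 0 - 4 * X 2 from rfl, show (4 : MvPolynomial (Fin 3) ℂ) = C 4 from (map_ofNat C 4).symm]
      simp [grad]
      try ring

lemma g2 (w : Fin 3 → ℂ) : grad (comps1 2) w = ![1, 0, 4] := by
  funext k
  obtain rfl | rfl | rfl := fin3_cases k <;>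
    · rw [show comps1 2 = X 0 + 4 * X 2 from rfl, show (4 : MvPolynomial (Fin 3) ℂ) = C 4 from (map_ofNat C 4).symm]
      simp [grad]
      try ring

lemma g3 (w : Fin 3 → ℂ) : grad (comps1 3) w = ![3, 4, 0] := by
  funext k
  obtain rfl | rfl | rfl := fin3_cases k <;>
    · rw [show comps1 3 = 3 * X 0 + 4 * X 1 from rfl, show (3 : MvPolynomial (Fin 3) ℂ) = C 3 from (map_ofNat C 3).symm, show (4 : MvPolynomial (Fin 3) ℂ) = C 4 from (map_ofNat C 4).symm]
      simp [grad]
      try ring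

lemma g4 (w : Fin 3 → ℂ) : grad (comps1 4) w = ![1, 0, 3] := by
  funext k
  obtain rfl | rfl | rfl := fin3_cases k <;>
    · rw [show comps1 4 = X 0 + 3 * X 2 from rfl, show (3 : MvPolynomial (Fin 3) ℂ) = C 3 from (map_ofNat C 3).symm]
      simp [grad]
      try ring

lemma g5 (w : Fin 3 → ℂ) : grad (comps1 5) w = ![6, 1, 21] := by
  funext k
  obtain rfl | rfl | rfl := fin3_cases k <;>
    · rw [show comps1 5 = 6 * X 0 + X 1 + 21 * X 2 from rfl, show (6 : MvPolynomial (Fin 3) ℂ) = C 6 from (map_ofNat C 6).symm, show (21 : MvPolynomial (Fin 3) ℂ) = C 21 from (map_ofNat C 21).symm]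
      simp [grad]
      try ring

lemma g6 (w : Fin 3 → ℂ) : grad (comps1 6) w = ![0, 1, 3] := by
  funext k
  obtain rfl | rfl | rfl := fin3_cases k <;>
    · rw [show comps1 6 = X 1 + 3 * X 2 from rfl, show (3 : MvPolynomial (Fin 3) ℂ) = C 3 from (map_ofNat C 3).symm]
      simp [grad]
      try ring

lemma ne3 (a b c : ℂ) (h : c ≠ 0) : (![a, b, c] : Fin 3 → ℂ) ≠ 0 :=
  fun H => h (by simpa using congrFun H 2)
lemma ne3' (a b c : ℂ) (h : b ≠ 0) : (![a, b, c] : Fin 3 → ℂ) ≠ 0 :=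
  fun H => h (by simpa using congrFun H 1)

lemma hP0 : (![(4:ℂ), -3, 1] : Fin 3 → ℂ) ≠ 0 := ne3 _ _ _ one_ne_zero
lemma hP2 : (![(0:ℂ), 1, 0] : Fin 3 → ℂ) ≠ 0 := ne3' _ _ _ one_ne_zero

lemma mk_eq_std (v : Fin 3 → ℂ) (hv : v ≠ 0) (α β : ℂ) (hw : (![α, β, 1] : Fin 3 → ℂ) ≠ 0)
    (h0 : v 0 = α * v 2) (h1 : v 1 = β * v 2) :
    Projectivization.mk ℂ v hv = Projectivization.mk ℂ ![α, β, 1] hw := by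
  have hz : v 2 ≠ 0 := by
    intro hz
    apply hv
    funext k
    obtain rfl | rfl | rfl := fin3_cases k
    · simp [h0, hz]
    · simp [h1, hz]
    · simp [hz]
  rw [Projectivization.mk_eq_mk_iff]
  refine ⟨Units.mk0 (v 2) hz, ?_⟩
  funext k
  obtain rfl | rfl | rfl := fin3_cases k <;>
    · simp [Units.smul_def, h0, h1]
      try ring

lemma mk_eq_inf (v : Fin 3 → ℂ) (hv : v ≠ 0)
    (h0 : v 0 = 0) (h2 : v 2 = 0) :
    Projectivization.mk ℂ v hv = Projectivization.mk ℂ ![0, 1, 0] hP2 := by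
  have hy : v 1 ≠ 0 := by
    intro hy
    apply hv
    funext k
    obtain rfl | rfl | rfl := fin3_cases k <;> simp [h0, hy, h2]
  rw [Projectivization.mk_eq_mk_iff]
  refine ⟨Units.mk0 (v 1) hy, ?_⟩
  funext k
  obtain rfl | rfl | rfl := fin3_cases k <;> simp [Units.smul_def, h0, h2]

lemma mk_ne {w1 w2 : Fin 3 → ℂ} (h1 : w1 ≠ 0) (h2 : w2 ≠ 0) (k l : Fin 3)
    (h : w1 k * w2 l ≠ w1 l * w2 k) :
    Projectivization.mk ℂ w1 h1 ≠ Projectivization.mk ℂ w2 h2 := by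
  intro he
  obtain ⟨a, ha⟩ := (Projectivization.mk_eq_mk_iff ℂ _ _ h1 h2).1 he
  apply h
  rw [← ha]
  simp only [Units.smul_def, Pi.smul_apply, smul_eq_mul]
  ring

lemma es0 (a : ℂ) (v : Fin 3 → ℂ) : eval (a • v) (comps1 0) = a^2 * eval v (comps1 0) := by
  rw [ev0, ev0]; simp only [Pi.smul_apply, smul_eq_mul]; ring
lemma es1 (a : ℂ) (v : Fin 3 → ℂ) : eval (a • v) (comps1 1) = a * eval v (comps1 1) := by
  rw [ev1, ev1]; simp only [Pi.smul_apply, smul_eq_mul]; ring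


lemma es2 (a : ℂ) (v : Fin 3 → ℂ) : eval (a • v) (comps1 2) = a * eval v (comps1 2) := by
  rw [ev2, ev2]; simp only [Pi.smul_apply, smul_eq_mul]; ring

lemma es3 (a : ℂ) (v : Fin 3 → ℂ) : eval (a • v) (comps1 3) = a * eval v (comps1 3) := by
  rw [ev3, ev3]; simp only [Pi.smul_apply, smul_eq_mul]; ring

lemma es4 (a : ℂ) (v : Fin 3 → ℂ) : eval (a • v) (comps1 4) = a * eval v (comps1 4) := by
  rw [ev4, ev4]; simp only [Pi.smul_apply, smul_eq_mul]; ring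

lemma es5 (a : ℂ) (v : Fin 3 → ℂ) : eval (a • v) (comps1 5) = a * eval v (comps1 5) := by
  rw [ev5, ev5]; simp only [Pi.smul_apply, smul_eq_mul]; ring

lemma es6 (a : ℂ) (v : Fin 3 → ℂ) : eval (a • v) (comps1 6) = a * eval v (comps1 6) := by
  rw [ev6, ev6]; simp only [Pi.smul_apply, smul_eq_mul]; ring

lemma eval_zero_smul (i : Fin 7) {a : ℂ} (ha : a ≠ 0) (v : Fin 3 → ℂ) :
    eval (a • v) (comps1 i) = 0 ↔ eval v (comps1 i) = 0 := by
  obtain rfl | rfl | rfl | rfl | rfl | rfl | rfl := fin7_cases i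
  · rw [es0, mul_eq_zero]; simp [pow_eq_zero_iff, ha]
  · rw [es1, mul_eq_zero]; simp [ha]
  · rw [es2, mul_eq_zero]; simp [ha]
  · rw [es3, mul_eq_zero]; simp [ha]
  · rw [es4, mul_eq_zero]; simp [ha]
  · rw [es5, mul_eq_zero]; simp [ha]
  · rw [es6, mul_eq_zero]; simp [ha]

lemma mult1_mk (v : Fin 3 → ℂ) (hv : v ≠ 0) :
    mult1 (Projectivization.mk ℂ v hv) =
      (Finset.univ.filter fun i : Fin 7 => eval v (comps1 i) = 0).card := by
  obtain ⟨a, ha⟩ := (Projectivization.mk_eq_mk_iff ℂ _ _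
    (Projectivization.rep_nonzero _) hv).1 (Projectivization.mk_rep _)
  unfold mult1
  congr 1
  apply Finset.filter_congr
  intro i _
  rw [← ha, Units.smul_def]
  exact eval_zero_smul i a.ne_zero v

lemma hP1 : (![(-4:ℂ), 3, 1] : Fin 3 → ℂ) ≠ 0 := ne3 _ _ _ one_ne_zero
lemma hP3 : (![(-4:ℂ), -3, 1] : Fin 3 → ℂ) ≠ 0 := ne3 _ _ _ one_ne_zero
lemma hP4 : (![(-3:ℂ), -3, 1] : Fin 3 → ℂ) ≠ 0 := ne3 _ _ _ one_ne_zero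
lemma hP5 : (![(4:ℂ), 3, 1] : Fin 3 → ℂ) ≠ 0 := ne3 _ _ _ one_ne_zero
lemma hP6 : (![(4:ℂ), -45, 1] : Fin 3 → ℂ) ≠ 0 := ne3 _ _ _ one_ne_zero
lemma hP7 : (![(-3:ℂ), 9/4, 1] : Fin 3 → ℂ) ≠ 0 := ne3 _ _ _ one_ne_zero
lemma hP8 : (![(-3:ℂ), 4, 1] : Fin 3 → ℂ) ≠ 0 := ne3 _ _ _ one_ne_zero
lemma hP9 : (![(-3:ℂ), -4, 1] : Fin 3 → ℂ) ≠ 0 := ne3 _ _ _ one_ne_zero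
lemma hP10 : (![(-104/37:ℂ), -153/37, 1] : Fin 3 → ℂ) ≠ 0 := ne3 _ _ _ one_ne_zero

noncomputable def pts : Fin 11 → Projectivization ℂ (Fin 3 → ℂ) :=
  ![Projectivization.mk ℂ ![(4:ℂ), -3, 1] hP0,
    Projectivization.mk ℂ ![(-4:ℂ), 3, 1] hP1,
    Projectivization.mk ℂ ![(0:ℂ), 1, 0] hP2,
    Projectivization.mk ℂ ![(-4:ℂ), -3, 1] hP3,
    Projectivization.mk ℂ ![(-3:ℂ), -3, 1] hP4,
    Projectivization.mk ℂ ![(4:ℂ), 3, 1] hP5,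
    Projectivization.mk ℂ ![(4:ℂ), -45, 1] hP6,
    Projectivization.mk ℂ ![(-3:ℂ), 9/4, 1] hP7,
    Projectivization.mk ℂ ![(-3:ℂ), 4, 1] hP8,
    Projectivization.mk ℂ ![(-3:ℂ), -4, 1] hP9,
    Projectivization.mk ℂ ![(-104/37:ℂ), -153/37, 1] hP10]

lemma pair_1_2 (v : Fin 3 → ℂ) (hv : v ≠ 0) (hi : eval v (comps1 1) = 0)
    (hj : eval v (comps1 2) = 0) : Projectivization.mk ℂ v hv = pts 2 := by
  rw [ev1] at hi; rw [ev2] at hj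
  exact mk_eq_inf v hv (by linear_combination (1/2) * hi + (1/2) * hj) (by linear_combination (-1/8) * hi + (1/8) * hj)

lemma pair_1_3 (v : Fin 3 → ℂ) (hv : v ≠ 0) (hi : eval v (comps1 1) = 0)
    (hj : eval v (comps1 3) = 0) : Projectivization.mk ℂ v hv = pts 0 := by
  rw [ev1] at hi; rw [ev3] at hj
  exact mk_eq_std v hv (4) (-3) hP0 (by linear_combination (1) * hi) (by linear_combination (-3/4) * hi + (1/4) * hj)

lemma pair_1_4 (v : Fin 3 → ℂ) (hv : v ≠ 0) (hi : eval v (comps1 1) = 0)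
    (hj : eval v (comps1 4) = 0) : Projectivization.mk ℂ v hv = pts 2 := by
  rw [ev1] at hi; rw [ev4] at hj
  exact mk_eq_inf v hv (by linear_combination (3/7) * hi + (4/7) * hj) (by linear_combination (-1/7) * hi + (1/7) * hj)

lemma pair_1_5 (v : Fin 3 → ℂ) (hv : v ≠ 0) (hi : eval v (comps1 1) = 0)
    (hj : eval v (comps1 5) = 0) : Projectivization.mk ℂ v hv = pts 6 := by
  rw [ev1] at hi; rw [ev5] at hj
  exact mk_eq_std v hv (4) (-45) hP6 (by linear_combination (1) * hi) (by linear_combination (-6) * hi + (1) * hj)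

lemma pair_1_6 (v : Fin 3 → ℂ) (hv : v ≠ 0) (hi : eval v (comps1 1) = 0)
    (hj : eval v (comps1 6) = 0) : Projectivization.mk ℂ v hv = pts 0 := by
  rw [ev1] at hi; rw [ev6] at hj
  exact mk_eq_std v hv (4) (-3) hP0 (by linear_combination (1) * hi) (by linear_combination (1) * hj)

lemma pair_2_3 (v : Fin 3 → ℂ) (hv : v ≠ 0) (hi : eval v (comps1 2) = 0)
    (hj : eval v (comps1 3) = 0) : Projectivization.mk ℂ v hv = pts 1 := by
  rw [ev2] at hi; rw [ev3] at hj
  exact mk_eq_std v hv (-4) (3) hP1 (by linear_combination (1) * hi) (by linear_combination (-3/4) * hi + (1/4) * hj)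

lemma pair_2_4 (v : Fin 3 → ℂ) (hv : v ≠ 0) (hi : eval v (comps1 2) = 0)
    (hj : eval v (comps1 4) = 0) : Projectivization.mk ℂ v hv = pts 2 := by
  rw [ev2] at hi; rw [ev4] at hj
  exact mk_eq_inf v hv (by linear_combination (-3) * hi + (4) * hj) (by linear_combination (1) * hi + (-1) * hj)

lemma pair_2_5 (v : Fin 3 → ℂ) (hv : v ≠ 0) (hi : eval v (comps1 2) = 0)
    (hj : eval v (comps1 5) = 0) : Projectivization.mk ℂ v hv = pts 1 := by
  rw [ev2] at hi; rw [ev5] at hj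
  exact mk_eq_std v hv (-4) (3) hP1 (by linear_combination (1) * hi) (by linear_combination (-6) * hi + (1) * hj)

lemma pair_2_6 (v : Fin 3 → ℂ) (hv : v ≠ 0) (hi : eval v (comps1 2) = 0)
    (hj : eval v (comps1 6) = 0) : Projectivization.mk ℂ v hv = pts 3 := by
  rw [ev2] at hi; rw [ev6] at hj
  exact mk_eq_std v hv (-4) (-3) hP3 (by linear_combination (1) * hi) (by linear_combination (1) * hj)

lemma pair_3_4 (v : Fin 3 → ℂ) (hv : v ≠ 0) (hi : eval v (comps1 3) = 0)
    (hj : eval v (comps1 4) = 0) : Projectivization.mk ℂ v hv = pts 7 := by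
  rw [ev3] at hi; rw [ev4] at hj
  exact mk_eq_std v hv (-3) (9/4) hP7 (by linear_combination (1) * hj) (by linear_combination (1/4) * hi + (-3/4) * hj)

lemma pair_3_5 (v : Fin 3 → ℂ) (hv : v ≠ 0) (hi : eval v (comps1 3) = 0)
    (hj : eval v (comps1 5) = 0) : Projectivization.mk ℂ v hv = pts 1 := by
  rw [ev3] at hi; rw [ev5] at hj
  exact mk_eq_std v hv (-4) (3) hP1 (by linear_combination (-1/21) * hi + (4/21) * hj) (by linear_combination (2/7) * hi + (-1/7) * hj)

lemma pair_3_6 (v : Fin 3 → ℂ) (hv : v ≠ 0) (hi : eval v (comps1 3) = 0)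
    (hj : eval v (comps1 6) = 0) : Projectivization.mk ℂ v hv = pts 0 := by
  rw [ev3] at hi; rw [ev6] at hj
  exact mk_eq_std v hv (4) (-3) hP0 (by linear_combination (1/3) * hi + (-4/3) * hj) (by linear_combination (1) * hj)

lemma pair_4_5 (v : Fin 3 → ℂ) (hv : v ≠ 0) (hi : eval v (comps1 4) = 0)
    (hj : eval v (comps1 5) = 0) : Projectivization.mk ℂ v hv = pts 4 := by
  rw [ev4] at hi; rw [ev5] at hj
  exact mk_eq_std v hv (-3) (-3) hP4 (by linear_combination (1) * hi) (by linear_combination (-6) * hi + (1) * hj)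

lemma pair_4_6 (v : Fin 3 → ℂ) (hv : v ≠ 0) (hi : eval v (comps1 4) = 0)
    (hj : eval v (comps1 6) = 0) : Projectivization.mk ℂ v hv = pts 4 := by
  rw [ev4] at hi; rw [ev6] at hj
  exact mk_eq_std v hv (-3) (-3) hP4 (by linear_combination (1) * hi) (by linear_combination (1) * hj)

lemma pair_5_6 (v : Fin 3 → ℂ) (hv : v ≠ 0) (hi : eval v (comps1 5) = 0)
    (hj : eval v (comps1 6) = 0) : Projectivization.mk ℂ v hv = pts 4 := by
  rw [ev5] at hi; rw [ev6] at hj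
  exact mk_eq_std v hv (-3) (-3) hP4 (by linear_combination (1/6) * hi + (-1/6) * hj) (by linear_combination (1) * hj)

lemma pair_0_1 (v : Fin 3 → ℂ) (hv : v ≠ 0) (hi : eval v (comps1 0) = 0)
    (hj : eval v (comps1 1) = 0) :
    Projectivization.mk ℂ v hv = pts 5 ∨ Projectivization.mk ℂ v hv = pts 0 := by
  rw [ev0] at hi; rw [ev1] at hj
  rcases mul_eq_zero.1 (show (v 1 - 3*v 2) * (v 1 + 3*v 2) = 0 by linear_combination hi - (v 0 + 4*v 2) * hj) with h | h
  · exact Or.inl (mk_eq_std v hv (4) (3) hP5 (by linear_combination (1) * hj) (by linear_combination (1) * h))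
  · exact Or.inr (mk_eq_std v hv (4) (-3) hP0 (by linear_combination (1) * hj) (by linear_combination (1) * h))

lemma pair_0_2 (v : Fin 3 → ℂ) (hv : v ≠ 0) (hi : eval v (comps1 0) = 0)
    (hj : eval v (comps1 2) = 0) :
    Projectivization.mk ℂ v hv = pts 1 ∨ Projectivization.mk ℂ v hv = pts 3 := by
  rw [ev0] at hi; rw [ev2] at hj
  rcases mul_eq_zero.1 (show (v 1 - 3*v 2) * (v 1 + 3*v 2) = 0 by linear_combination hi - (v 0 - 4*v 2) * hj) with h | h
  · exact Or.inl (mk_eq_std v hv (-4) (3) hP1 (by linear_combination (1) * hj) (by linear_combination (1) * h))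
  · exact Or.inr (mk_eq_std v hv (-4) (-3) hP3 (by linear_combination (1) * hj) (by linear_combination (1) * h))

lemma pair_0_3 (v : Fin 3 → ℂ) (hv : v ≠ 0) (hi : eval v (comps1 0) = 0)
    (hj : eval v (comps1 3) = 0) :
    Projectivization.mk ℂ v hv = pts 0 ∨ Projectivization.mk ℂ v hv = pts 1 := by
  rw [ev0] at hi; rw [ev3] at hj
  rcases mul_eq_zero.1 (show (v 0 - 4*v 2) * (v 0 + 4*v 2) = 0 by linear_combination (16/25) * hi + ((3*v 0 - 4*v 1)/25) * hj) with h | h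
  · exact Or.inl (mk_eq_std v hv (4) (-3) hP0 (by linear_combination (1) * h) (by linear_combination (-3/4) * h + (1/4) * hj))
  · exact Or.inr (mk_eq_std v hv (-4) (3) hP1 (by linear_combination (1) * h) (by linear_combination (-3/4) * h + (1/4) * hj))

lemma pair_0_4 (v : Fin 3 → ℂ) (hv : v ≠ 0) (hi : eval v (comps1 0) = 0)
    (hj : eval v (comps1 4) = 0) :
    Projectivization.mk ℂ v hv = pts 8 ∨ Projectivization.mk ℂ v hv = pts 9 := by
  rw [ev0] at hi; rw [ev4] at hj
  rcases mul_eq_zero.1 (show (v 1 - 4*v 2) * (v 1 + 4*v 2) = 0 by linear_combination hi - (v 0 - 3*v 2) * hj) with h | h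
  · exact Or.inl (mk_eq_std v hv (-3) (4) hP8 (by linear_combination (1) * hj) (by linear_combination (1) * h))
  · exact Or.inr (mk_eq_std v hv (-3) (-4) hP9 (by linear_combination (1) * hj) (by linear_combination (1) * h))

lemma pair_0_5 (v : Fin 3 → ℂ) (hv : v ≠ 0) (hi : eval v (comps1 0) = 0)
    (hj : eval v (comps1 5) = 0) :
    Projectivization.mk ℂ v hv = pts 1 ∨ Projectivization.mk ℂ v hv = pts 10 := by
  rw [ev0] at hi; rw [ev5] at hj
  rcases mul_eq_zero.1 (show (v 0 + 4*v 2) * (37*v 0 + 104*v 2) = 0 by linear_combination hi + (6*v 0 - v 1 + 21*v 2) * hj) with h | h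
  · exact Or.inl (mk_eq_std v hv (-4) (3) hP1 (by linear_combination (1) * h) (by linear_combination (-6) * h + (1) * hj))
  · exact Or.inr (mk_eq_std v hv (-104/37) (-153/37) hP10 (by linear_combination (1/37) * h) (by linear_combination (-6/37) * h + (1) * hj))

lemma pair_0_6 (v : Fin 3 → ℂ) (hv : v ≠ 0) (hi : eval v (comps1 0) = 0)
    (hj : eval v (comps1 6) = 0) :
    Projectivization.mk ℂ v hv = pts 0 ∨ Projectivization.mk ℂ v hv = pts 3 := by
  rw [ev0] at hi; rw [ev6] at hj
  rcases mul_eq_zero.1 (show (v 0 - 4*v 2) * (v 0 + 4*v 2) = 0 by linear_combination hi - (v 1 - 3*v 2) * hj) with h | h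
  · exact Or.inl (mk_eq_std v hv (4) (-3) hP0 (by linear_combination (1) * h) (by linear_combination (1) * hj))
  · exact Or.inr (mk_eq_std v hv (-4) (-3) hP3 (by linear_combination (1) * h) (by linear_combination (1) * hj))

lemma classify (v : Fin 3 → ℂ) (hv : v ≠ 0) (i j : Fin 7) (hij : i ≠ j)
    (hi : eval v (comps1 i) = 0) (hj : eval v (comps1 j) = 0) :
    ∃ k : Fin 11, Projectivization.mk ℂ v hv = pts k := by
  obtain rfl | rfl | rfl | rfl | rfl | rfl | rfl := fin7_cases i <;>
    obtain rfl | rfl | rfl | rfl | rfl | rfl | rfl := fin7_cases j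
  · exact absurd rfl hij
  · exact (pair_0_1 v hv hi hj).elim (fun h => ⟨5, h⟩) (fun h => ⟨0, h⟩)
  · exact (pair_0_2 v hv hi hj).elim (fun h => ⟨1, h⟩) (fun h => ⟨3, h⟩)
  · exact (pair_0_3 v hv hi hj).elim (fun h => ⟨0, h⟩) (fun h => ⟨1, h⟩)
  · exact (pair_0_4 v hv hi hj).elim (fun h => ⟨8, h⟩) (fun h => ⟨9, h⟩)
  · exact (pair_0_5 v hv hi hj).elim (fun h => ⟨1, h⟩) (fun h => ⟨10, h⟩)
  · exact (pair_0_6 v hv hi hj).elim (fun h => ⟨0, h⟩) (fun h => ⟨3, h⟩)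
  · exact (pair_0_1 v hv hj hi).elim (fun h => ⟨5, h⟩) (fun h => ⟨0, h⟩)
  · exact absurd rfl hij
  · exact ⟨2, pair_1_2 v hv hi hj⟩
  · exact ⟨0, pair_1_3 v hv hi hj⟩
  · exact ⟨2, pair_1_4 v hv hi hj⟩
  · exact ⟨6, pair_1_5 v hv hi hj⟩
  · exact ⟨0, pair_1_6 v hv hi hj⟩
  · exact (pair_0_2 v hv hj hi).elim (fun h => ⟨1, h⟩) (fun h => ⟨3, h⟩)
  · exact ⟨2, pair_1_2 v hv hj hi⟩
  · exact absurd rfl hij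
  · exact ⟨1, pair_2_3 v hv hi hj⟩
  · exact ⟨2, pair_2_4 v hv hi hj⟩
  · exact ⟨1, pair_2_5 v hv hi hj⟩
  · exact ⟨3, pair_2_6 v hv hi hj⟩
  · exact (pair_0_3 v hv hj hi).elim (fun h => ⟨0, h⟩) (fun h => ⟨1, h⟩)
  · exact ⟨0, pair_1_3 v hv hj hi⟩
  · exact ⟨1, pair_2_3 v hv hj hi⟩
  · exact absurd rfl hij
  · exact ⟨7, pair_3_4 v hv hi hj⟩
  · exact ⟨1, pair_3_5 v hv hi hj⟩
  · exact ⟨0, pair_3_6 v hv hi hj⟩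
  · exact (pair_0_4 v hv hj hi).elim (fun h => ⟨8, h⟩) (fun h => ⟨9, h⟩)
  · exact ⟨2, pair_1_4 v hv hj hi⟩
  · exact ⟨2, pair_2_4 v hv hj hi⟩
  · exact ⟨7, pair_3_4 v hv hj hi⟩
  · exact absurd rfl hij
  · exact ⟨4, pair_4_5 v hv hi hj⟩
  · exact ⟨4, pair_4_6 v hv hi hj⟩
  · exact (pair_0_5 v hv hj hi).elim (fun h => ⟨1, h⟩) (fun h => ⟨10, h⟩)
  · exact ⟨6, pair_1_5 v hv hj hi⟩
  · exact ⟨1, pair_2_5 v hv hj hi⟩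
  · exact ⟨1, pair_3_5 v hv hj hi⟩
  · exact ⟨4, pair_4_5 v hv hj hi⟩
  · exact absurd rfl hij
  · exact ⟨4, pair_5_6 v hv hi hj⟩
  · exact (pair_0_6 v hv hj hi).elim (fun h => ⟨0, h⟩) (fun h => ⟨3, h⟩)
  · exact ⟨0, pair_1_6 v hv hj hi⟩
  · exact ⟨3, pair_2_6 v hv hj hi⟩
  · exact ⟨0, pair_3_6 v hv hj hi⟩
  · exact ⟨4, pair_4_6 v hv hj hi⟩
  · exact ⟨4, pair_5_6 v hv hj hi⟩
  · exact absurd rfl hij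

lemma m0 : mult1 (pts 0) = 4 := by
  rw [show pts 0 = Projectivization.mk ℂ ![(4:ℂ), -3, 1] hP0 from rfl, mult1_mk]
  have h : (Finset.univ.filter fun i : Fin 7 =>
      eval (![(4:ℂ), -3, 1] : Fin 3 → ℂ) (comps1 i) = 0) = {0, 1, 3, 6} := by
    ext i
    obtain rfl | rfl | rfl | rfl | rfl | rfl | rfl := fin7_cases i <;>
      simp only [Finset.mem_filter, Finset.mem_univ, true_and, ev0, ev1, ev2, ev3, ev4, ev5, ev6] <;>
      norm_num [Finset.mem_insert, Finset.mem_singleton, Matrix.cons_val_two, Matrix.tail_cons] <;>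
      decide
  rw [h]
  decide

lemma m1 : mult1 (pts 1) = 4 := by
  rw [show pts 1 = Projectivization.mk ℂ ![(-4:ℂ), 3, 1] hP1 from rfl, mult1_mk]
  have h : (Finset.univ.filter fun i : Fin 7 =>
      eval (![(-4:ℂ), 3, 1] : Fin 3 → ℂ) (comps1 i) = 0) = {0, 2, 3, 5} := by
    ext i
    obtain rfl | rfl | rfl | rfl | rfl | rfl | rfl := fin7_cases i <;>
      simp only [Finset.mem_filter, Finset.mem_univ, true_and, ev0, ev1, ev2, ev3, ev4, ev5, ev6] <;>
      norm_num [Finset.mem_insert, Finset.mem_singleton, Matrix.cons_val_two, Matrix.tail_cons] <;>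
      decide
  rw [h]
  decide

lemma m2 : mult1 (pts 2) = 3 := by
  rw [show pts 2 = Projectivization.mk ℂ ![(0:ℂ), 1, 0] hP2 from rfl, mult1_mk]
  have h : (Finset.univ.filter fun i : Fin 7 =>
      eval (![(0:ℂ), 1, 0] : Fin 3 → ℂ) (comps1 i) = 0) = {1, 2, 4} := by
    ext i
    obtain rfl | rfl | rfl | rfl | rfl | rfl | rfl := fin7_cases i <;>
      simp only [Finset.mem_filter, Finset.mem_univ, true_and, ev0, ev1, ev2, ev3, ev4, ev5, ev6] <;>
      norm_num [Finset.mem_insert, Finset.mem_singleton, Matrix.cons_val_two, Matrix.tail_cons] <;>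
      decide
  rw [h]
  decide

lemma m3 : mult1 (pts 3) = 3 := by
  rw [show pts 3 = Projectivization.mk ℂ ![(-4:ℂ), -3, 1] hP3 from rfl, mult1_mk]
  have h : (Finset.univ.filter fun i : Fin 7 =>
      eval (![(-4:ℂ), -3, 1] : Fin 3 → ℂ) (comps1 i) = 0) = {0, 2, 6} := by
    ext i
    obtain rfl | rfl | rfl | rfl | rfl | rfl | rfl := fin7_cases i <;>
      simp only [Finset.mem_filter, Finset.mem_univ, true_and, ev0, ev1, ev2, ev3, ev4, ev5, ev6] <;>
      norm_num [Finset.mem_insert, Finset.mem_singleton, Matrix.cons_val_two, Matrix.tail_cons] <;>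
      decide
  rw [h]
  decide

lemma m4 : mult1 (pts 4) = 3 := by
  rw [show pts 4 = Projectivization.mk ℂ ![(-3:ℂ), -3, 1] hP4 from rfl, mult1_mk]
  have h : (Finset.univ.filter fun i : Fin 7 =>
      eval (![(-3:ℂ), -3, 1] : Fin 3 → ℂ) (comps1 i) = 0) = {4, 5, 6} := by
    ext i
    obtain rfl | rfl | rfl | rfl | rfl | rfl | rfl := fin7_cases i <;>
      simp only [Finset.mem_filter, Finset.mem_univ, true_and, ev0, ev1, ev2, ev3, ev4, ev5, ev6] <;>
      norm_num [Finset.mem_insert, Finset.mem_singleton, Matrix.cons_val_two, Matrix.tail_cons] <;>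
      decide
  rw [h]
  decide

lemma m5 : mult1 (pts 5) = 2 := by
  rw [show pts 5 = Projectivization.mk ℂ ![(4:ℂ), 3, 1] hP5 from rfl, mult1_mk]
  have h : (Finset.univ.filter fun i : Fin 7 =>
      eval (![(4:ℂ), 3, 1] : Fin 3 → ℂ) (comps1 i) = 0) = {0, 1} := by
    ext i
    obtain rfl | rfl | rfl | rfl | rfl | rfl | rfl := fin7_cases i <;>
      simp only [Finset.mem_filter, Finset.mem_univ, true_and, ev0, ev1, ev2, ev3, ev4, ev5, ev6] <;>
      norm_num [Finset.mem_insert, Finset.mem_singleton, Matrix.cons_val_two, Matrix.tail_cons] <;>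
      decide
  rw [h]
  decide

lemma m6 : mult1 (pts 6) = 2 := by
  rw [show pts 6 = Projectivization.mk ℂ ![(4:ℂ), -45, 1] hP6 from rfl, mult1_mk]
  have h : (Finset.univ.filter fun i : Fin 7 =>
      eval (![(4:ℂ), -45, 1] : Fin 3 → ℂ) (comps1 i) = 0) = {1, 5} := by
    ext i
    obtain rfl | rfl | rfl | rfl | rfl | rfl | rfl := fin7_cases i <;>
      simp only [Finset.mem_filter, Finset.mem_univ, true_and, ev0, ev1, ev2, ev3, ev4, ev5, ev6] <;>
      norm_num [Finset.mem_insert, Finset.mem_singleton, Matrix.cons_val_two, Matrix.tail_cons] <;>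
      decide
  rw [h]
  decide

lemma m7 : mult1 (pts 7) = 2 := by
  rw [show pts 7 = Projectivization.mk ℂ ![(-3:ℂ), 9/4, 1] hP7 from rfl, mult1_mk]
  have h : (Finset.univ.filter fun i : Fin 7 =>
      eval (![(-3:ℂ), 9/4, 1] : Fin 3 → ℂ) (comps1 i) = 0) = {3, 4} := by
    ext i
    obtain rfl | rfl | rfl | rfl | rfl | rfl | rfl := fin7_cases i <;>
      simp only [Finset.mem_filter, Finset.mem_univ, true_and, ev0, ev1, ev2, ev3, ev4, ev5, ev6] <;>
      norm_num [Finset.mem_insert, Finset.mem_singleton, Matrix.cons_val_two, Matrix.tail_cons] <;>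
      decide
  rw [h]
  decide

lemma m8 : mult1 (pts 8) = 2 := by
  rw [show pts 8 = Projectivization.mk ℂ ![(-3:ℂ), 4, 1] hP8 from rfl, mult1_mk]
  have h : (Finset.univ.filter fun i : Fin 7 =>
      eval (![(-3:ℂ), 4, 1] : Fin 3 → ℂ) (comps1 i) = 0) = {0, 4} := by
    ext i
    obtain rfl | rfl | rfl | rfl | rfl | rfl | rfl := fin7_cases i <;>
      simp only [Finset.mem_filter, Finset.mem_univ, true_and, ev0, ev1, ev2, ev3, ev4, ev5, ev6] <;>
      norm_num [Finset.mem_insert, Finset.mem_singleton, Matrix.cons_val_two, Matrix.tail_cons] <;>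
      decide
  rw [h]
  decide

lemma m9 : mult1 (pts 9) = 2 := by
  rw [show pts 9 = Projectivization.mk ℂ ![(-3:ℂ), -4, 1] hP9 from rfl, mult1_mk]
  have h : (Finset.univ.filter fun i : Fin 7 =>
      eval (![(-3:ℂ), -4, 1] : Fin 3 → ℂ) (comps1 i) = 0) = {0, 4} := by
    ext i
    obtain rfl | rfl | rfl | rfl | rfl | rfl | rfl := fin7_cases i <;>
      simp only [Finset.mem_filter, Finset.mem_univ, true_and, ev0, ev1, ev2, ev3, ev4, ev5, ev6] <;>
      norm_num [Finset.mem_insert, Finset.mem_singleton, Matrix.cons_val_two, Matrix.tail_cons] <;>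
      decide
  rw [h]
  decide

lemma m10 : mult1 (pts 10) = 2 := by
  rw [show pts 10 = Projectivization.mk ℂ ![(-104/37:ℂ), -153/37, 1] hP10 from rfl, mult1_mk]
  have h : (Finset.univ.filter fun i : Fin 7 =>
      eval (![(-104/37:ℂ), -153/37, 1] : Fin 3 → ℂ) (comps1 i) = 0) = {0, 5} := by
    ext i
    obtain rfl | rfl | rfl | rfl | rfl | rfl | rfl := fin7_cases i <;>
      simp only [Finset.mem_filter, Finset.mem_univ, true_and, ev0, ev1, ev2, ev3, ev4, ev5, ev6] <;>
      norm_num [Finset.mem_insert, Finset.mem_singleton, Matrix.cons_val_two, Matrix.tail_cons] <;>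
      decide
  rw [h]
  decide

lemma n_0_1 : pts 0 ≠ pts 1 := by
  rw [show pts 0 = Projectivization.mk ℂ ![(4:ℂ), -3, 1] hP0 from rfl,
     show pts 1 = Projectivization.mk ℂ ![(-4:ℂ), 3, 1] hP1 from rfl]
  exact mk_ne _ _ 0 2 (by norm_num [Matrix.cons_val_two, Matrix.tail_cons])

lemma n_2_3 : pts 2 ≠ pts 3 := by
  rw [show pts 2 = Projectivization.mk ℂ ![(0:ℂ), 1, 0] hP2 from rfl,
     show pts 3 = Projectivization.mk ℂ ![(-4:ℂ), -3, 1] hP3 from rfl]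
  exact mk_ne _ _ 0 1 (by norm_num)

lemma n_2_4 : pts 2 ≠ pts 4 := by
  rw [show pts 2 = Projectivization.mk ℂ ![(0:ℂ), 1, 0] hP2 from rfl,
     show pts 4 = Projectivization.mk ℂ ![(-3:ℂ), -3, 1] hP4 from rfl]
  exact mk_ne _ _ 0 1 (by norm_num)

lemma n_3_4 : pts 3 ≠ pts 4 := by
  rw [show pts 3 = Projectivization.mk ℂ ![(-4:ℂ), -3, 1] hP3 from rfl,
     show pts 4 = Projectivization.mk ℂ ![(-3:ℂ), -3, 1] hP4 from rfl]
  exact mk_ne _ _ 0 1 (by norm_num)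

lemma n_5_6 : pts 5 ≠ pts 6 := by
  rw [show pts 5 = Projectivization.mk ℂ ![(4:ℂ), 3, 1] hP5 from rfl,
     show pts 6 = Projectivization.mk ℂ ![(4:ℂ), -45, 1] hP6 from rfl]
  exact mk_ne _ _ 0 1 (by norm_num)

lemma n_5_7 : pts 5 ≠ pts 7 := by
  rw [show pts 5 = Projectivization.mk ℂ ![(4:ℂ), 3, 1] hP5 from rfl,
     show pts 7 = Projectivization.mk ℂ ![(-3:ℂ), 9/4, 1] hP7 from rfl]
  exact mk_ne _ _ 0 1 (by norm_num)

lemma n_5_8 : pts 5 ≠ pts 8 := by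
  rw [show pts 5 = Projectivization.mk ℂ ![(4:ℂ), 3, 1] hP5 from rfl,
     show pts 8 = Projectivization.mk ℂ ![(-3:ℂ), 4, 1] hP8 from rfl]
  exact mk_ne _ _ 0 1 (by norm_num)

lemma n_5_9 : pts 5 ≠ pts 9 := by
  rw [show pts 5 = Projectivization.mk ℂ ![(4:ℂ), 3, 1] hP5 from rfl,
     show pts 9 = Projectivization.mk ℂ ![(-3:ℂ), -4, 1] hP9 from rfl]
  exact mk_ne _ _ 0 1 (by norm_num)

lemma n_5_10 : pts 5 ≠ pts 10 := by
  rw [show pts 5 = Projectivization.mk ℂ ![(4:ℂ), 3, 1] hP5 from rfl,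
     show pts 10 = Projectivization.mk ℂ ![(-104/37:ℂ), -153/37, 1] hP10 from rfl]
  exact mk_ne _ _ 0 1 (by norm_num)

lemma n_6_7 : pts 6 ≠ pts 7 := by
  rw [show pts 6 = Projectivization.mk ℂ ![(4:ℂ), -45, 1] hP6 from rfl,
     show pts 7 = Projectivization.mk ℂ ![(-3:ℂ), 9/4, 1] hP7 from rfl]
  exact mk_ne _ _ 0 1 (by norm_num)

lemma n_6_8 : pts 6 ≠ pts 8 := by
  rw [show pts 6 = Projectivization.mk ℂ ![(4:ℂ), -45, 1] hP6 from rfl,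
     show pts 8 = Projectivization.mk ℂ ![(-3:ℂ), 4, 1] hP8 from rfl]
  exact mk_ne _ _ 0 1 (by norm_num)

lemma n_6_9 : pts 6 ≠ pts 9 := by
  rw [show pts 6 = Projectivization.mk ℂ ![(4:ℂ), -45, 1] hP6 from rfl,
     show pts 9 = Projectivization.mk ℂ ![(-3:ℂ), -4, 1] hP9 from rfl]
  exact mk_ne _ _ 0 1 (by norm_num)

lemma n_6_10 : pts 6 ≠ pts 10 := by
  rw [show pts 6 = Projectivization.mk ℂ ![(4:ℂ), -45, 1] hP6 from rfl,
     show pts 10 = Projectivization.mk ℂ ![(-104/37:ℂ), -153/37, 1] hP10 from rfl]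
  exact mk_ne _ _ 0 1 (by norm_num)

lemma n_7_8 : pts 7 ≠ pts 8 := by
  rw [show pts 7 = Projectivization.mk ℂ ![(-3:ℂ), 9/4, 1] hP7 from rfl,
     show pts 8 = Projectivization.mk ℂ ![(-3:ℂ), 4, 1] hP8 from rfl]
  exact mk_ne _ _ 0 1 (by norm_num)

lemma n_7_9 : pts 7 ≠ pts 9 := by
  rw [show pts 7 = Projectivization.mk ℂ ![(-3:ℂ), 9/4, 1] hP7 from rfl,
     show pts 9 = Projectivization.mk ℂ ![(-3:ℂ), -4, 1] hP9 from rfl]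
  exact mk_ne _ _ 0 1 (by norm_num)

lemma n_7_10 : pts 7 ≠ pts 10 := by
  rw [show pts 7 = Projectivization.mk ℂ ![(-3:ℂ), 9/4, 1] hP7 from rfl,
     show pts 10 = Projectivization.mk ℂ ![(-104/37:ℂ), -153/37, 1] hP10 from rfl]
  exact mk_ne _ _ 0 1 (by norm_num)

lemma n_8_9 : pts 8 ≠ pts 9 := by
  rw [show pts 8 = Projectivization.mk ℂ ![(-3:ℂ), 4, 1] hP8 from rfl,
     show pts 9 = Projectivization.mk ℂ ![(-3:ℂ), -4, 1] hP9 from rfl]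
  exact mk_ne _ _ 0 1 (by norm_num)

lemma n_8_10 : pts 8 ≠ pts 10 := by
  rw [show pts 8 = Projectivization.mk ℂ ![(-3:ℂ), 4, 1] hP8 from rfl,
     show pts 10 = Projectivization.mk ℂ ![(-104/37:ℂ), -153/37, 1] hP10 from rfl]
  exact mk_ne _ _ 0 1 (by norm_num)

lemma n_9_10 : pts 9 ≠ pts 10 := by
  rw [show pts 9 = Projectivization.mk ℂ ![(-3:ℂ), -4, 1] hP9 from rfl,
     show pts 10 = Projectivization.mk ℂ ![(-104/37:ℂ), -153/37, 1] hP10 from rfl]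
  exact mk_ne _ _ 0 1 (by norm_num)

lemma mem11 (p : Projectivization ℂ (Fin 3 → ℂ)) (h2 : 2 ≤ mult1 p) :
    ∃ k : Fin 11, p = pts k := by
  have hcard : 1 < (Finset.univ.filter fun i : Fin 7 => eval p.rep (comps1 i) = 0).card := by
    unfold mult1 at h2; omega
  obtain ⟨i, hi, j, hj, hij⟩ := Finset.one_lt_card.1 hcard
  rw [Finset.mem_filter] at hi hj
  obtain ⟨k, hk⟩ := classify p.rep (Projectivization.rep_nonzero p) i j hij hi.2 hj.2
  refine ⟨k, ?_⟩
  rw [← Projectivization.mk_rep p]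
  exact hk

lemma set2 : {p : Projectivization ℂ (Fin 3 → ℂ) | mult1 p = 2} = ({pts 5, pts 6, pts 7, pts 8, pts 9, pts 10} : Set (Projectivization ℂ (Fin 3 → ℂ))) := by
  ext p
  simp only [Set.mem_setOf_eq, Set.mem_insert_iff, Set.mem_singleton_iff]
  constructor
  · intro h
    obtain ⟨k, rfl⟩ := mem11 p (by omega)
    obtain rfl | rfl | rfl | rfl | rfl | rfl | rfl | rfl | rfl | rfl | rfl := fin11_cases k
    · rw [m0] at h; omega
    · rw [m1] at h; omega
    · rw [m2] at h; omega
    · rw [m3] at h; omega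
    · rw [m4] at h; omega
    · exact Or.inl rfl
    · exact Or.inr (Or.inl rfl)
    · exact Or.inr (Or.inr (Or.inl rfl))
    · exact Or.inr (Or.inr (Or.inr (Or.inl rfl)))
    · exact Or.inr (Or.inr (Or.inr (Or.inr (Or.inl rfl))))
    · exact Or.inr (Or.inr (Or.inr (Or.inr (Or.inr (rfl)))))
  · rintro (rfl | rfl | rfl | rfl | rfl | rfl)
    exacts [m5, m6, m7, m8, m9, m10]

lemma set3 : {p : Projectivization ℂ (Fin 3 → ℂ) | mult1 p = 3} = ({pts 2, pts 3, pts 4} : Set (Projectivization ℂ (Fin 3 → ℂ))) := by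
  ext p
  simp only [Set.mem_setOf_eq, Set.mem_insert_iff, Set.mem_singleton_iff]
  constructor
  · intro h
    obtain ⟨k, rfl⟩ := mem11 p (by omega)
    obtain rfl | rfl | rfl | rfl | rfl | rfl | rfl | rfl | rfl | rfl | rfl := fin11_cases k
    · rw [m0] at h; omega
    · rw [m1] at h; omega
    · exact Or.inl rfl
    · exact Or.inr (Or.inl rfl)
    · exact Or.inr (Or.inr (rfl))
    · rw [m5] at h; omega
    · rw [m6] at h; omega
    · rw [m7] at h; omega
    · rw [m8] at h; omega
    · rw [m9] at h; omega
    · rw [m10] at h; omega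
  · rintro (rfl | rfl | rfl)
    exacts [m2, m3, m4]

lemma set4 : {p : Projectivization ℂ (Fin 3 → ℂ) | mult1 p = 4} = ({pts 0, pts 1} : Set (Projectivization ℂ (Fin 3 → ℂ))) := by
  ext p
  simp only [Set.mem_setOf_eq, Set.mem_insert_iff, Set.mem_singleton_iff]
  constructor
  · intro h
    obtain ⟨k, rfl⟩ := mem11 p (by omega)
    obtain rfl | rfl | rfl | rfl | rfl | rfl | rfl | rfl | rfl | rfl | rfl := fin11_cases k
    · exact Or.inl rfl
    · exact Or.inr (rfl)
    · rw [m2] at h; omega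
    · rw [m3] at h; omega
    · rw [m4] at h; omega
    · rw [m5] at h; omega
    · rw [m6] at h; omega
    · rw [m7] at h; omega
    · rw [m8] at h; omega
    · rw [m9] at h; omega
    · rw [m10] at h; omega
  · rintro (rfl | rfl)
    exacts [m0, m1]

lemma ncard2 : ({pts 5, pts 6, pts 7, pts 8, pts 9, pts 10} : Set (Projectivization ℂ (Fin 3 → ℂ))).ncard = 6 := by
  rw [Set.ncard_insert_of_notMem (by simp only [Set.mem_insert_iff, Set.mem_singleton_iff]; push_neg; exact ⟨n_5_6, n_5_7, n_5_8, n_5_9, n_5_10⟩),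
      Set.ncard_insert_of_notMem (by simp only [Set.mem_insert_iff, Set.mem_singleton_iff]; push_neg; exact ⟨n_6_7, n_6_8, n_6_9, n_6_10⟩),
      Set.ncard_insert_of_notMem (by simp only [Set.mem_insert_iff, Set.mem_singleton_iff]; push_neg; exact ⟨n_7_8, n_7_9, n_7_10⟩),
      Set.ncard_insert_of_notMem (by simp only [Set.mem_insert_iff, Set.mem_singleton_iff]; push_neg; exact ⟨n_8_9, n_8_10⟩),
      Set.ncard_pair n_9_10]

lemma ncard3 : ({pts 2, pts 3, pts 4} : Set (Projectivization ℂ (Fin 3 → ℂ))).ncard = 3 := by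
  rw [Set.ncard_insert_of_notMem (by simp only [Set.mem_insert_iff, Set.mem_singleton_iff]; push_neg; exact ⟨n_2_3, n_2_4⟩),
      Set.ncard_pair n_3_4]

lemma ncard4 : ({pts 0, pts 1} : Set (Projectivization ℂ (Fin 3 → ℂ))).ncard = 2 :=
  Set.ncard_pair n_0_1

lemma li_swap {a b : Fin 3 → ℂ} (h : LinearIndependent ℂ ![a, b]) :
    LinearIndependent ℂ ![b, a] := by
  rw [LinearIndependent.pair_iff] at h ⊢
  intro s t hst
  obtain ⟨h1, h2⟩ := h t s (by rw [add_comm]; exact hst)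
  exact ⟨h2, h1⟩

lemma tl_1_2 (w : Fin 3 → ℂ) :
    LinearIndependent ℂ ![grad (comps1 1) w, grad (comps1 2) w] := by
  rw [g1, g2, LinearIndependent.pair_iff]
  intro s t hst
  have e0 : s * (1) + t * (1) = 0 := congrFun hst 0
  have e1 : s * (0) + t * (0) = 0 := congrFun hst 1
  have e2 : s * (-4) + t * (4) = 0 := congrFun hst 2
  exact ⟨by linear_combination (1/2) * e0 + (-1/8) * e2, by linear_combination (1/2) * e0 + (1/8) * e2⟩

lemma tl_1_3 (w : Fin 3 → ℂ) :
    LinearIndependent ℂ ![grad (comps1 1) w, grad (comps1 3) w] := by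
  rw [g1, g3, LinearIndependent.pair_iff]
  intro s t hst
  have e0 : s * (1) + t * (3) = 0 := congrFun hst 0
  have e1 : s * (0) + t * (4) = 0 := congrFun hst 1
  have e2 : s * (-4) + t * (0) = 0 := congrFun hst 2
  exact ⟨by linear_combination (1) * e0 + (-3/4) * e1, by linear_combination (1/4) * e1⟩

lemma tl_1_4 (w : Fin 3 → ℂ) :
    LinearIndependent ℂ ![grad (comps1 1) w, grad (comps1 4) w] := by
  rw [g1, g4, LinearIndependent.pair_iff]
  intro s t hst
  have e0 : s * (1) + t * (1) = 0 := congrFun hst 0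
  have e1 : s * (0) + t * (0) = 0 := congrFun hst 1
  have e2 : s * (-4) + t * (3) = 0 := congrFun hst 2
  exact ⟨by linear_combination (3/7) * e0 + (-1/7) * e2, by linear_combination (4/7) * e0 + (1/7) * e2⟩

lemma tl_1_5 (w : Fin 3 → ℂ) :
    LinearIndependent ℂ ![grad (comps1 1) w, grad (comps1 5) w] := by
  rw [g1, g5, LinearIndependent.pair_iff]
  intro s t hst
  have e0 : s * (1) + t * (6) = 0 := congrFun hst 0
  have e1 : s * (0) + t * (1) = 0 := congrFun hst 1
  have e2 : s * (-4) + t * (21) = 0 := congrFun hst 2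
  exact ⟨by linear_combination (1) * e0 + (-6) * e1, by linear_combination (1) * e1⟩

lemma tl_1_6 (w : Fin 3 → ℂ) :
    LinearIndependent ℂ ![grad (comps1 1) w, grad (comps1 6) w] := by
  rw [g1, g6, LinearIndependent.pair_iff]
  intro s t hst
  have e0 : s * (1) + t * (0) = 0 := congrFun hst 0
  have e1 : s * (0) + t * (1) = 0 := congrFun hst 1
  have e2 : s * (-4) + t * (3) = 0 := congrFun hst 2
  exact ⟨by linear_combination (1) * e0, by linear_combination (1) * e1⟩

lemma tl_2_3 (w : Fin 3 → ℂ) :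
    LinearIndependent ℂ ![grad (comps1 2) w, grad (comps1 3) w] := by
  rw [g2, g3, LinearIndependent.pair_iff]
  intro s t hst
  have e0 : s * (1) + t * (3) = 0 := congrFun hst 0
  have e1 : s * (0) + t * (4) = 0 := congrFun hst 1
  have e2 : s * (4) + t * (0) = 0 := congrFun hst 2
  exact ⟨by linear_combination (1) * e0 + (-3/4) * e1, by linear_combination (1/4) * e1⟩

lemma tl_2_4 (w : Fin 3 → ℂ) :
    LinearIndependent ℂ ![grad (comps1 2) w, grad (comps1 4) w] := by
  rw [g2, g4, LinearIndependent.pair_iff]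
  intro s t hst
  have e0 : s * (1) + t * (1) = 0 := congrFun hst 0
  have e1 : s * (0) + t * (0) = 0 := congrFun hst 1
  have e2 : s * (4) + t * (3) = 0 := congrFun hst 2
  exact ⟨by linear_combination (-3) * e0 + (1) * e2, by linear_combination (4) * e0 + (-1) * e2⟩

lemma tl_2_5 (w : Fin 3 → ℂ) :
    LinearIndependent ℂ ![grad (comps1 2) w, grad (comps1 5) w] := by
  rw [g2, g5, LinearIndependent.pair_iff]
  intro s t hst
  have e0 : s * (1) + t * (6) = 0 := congrFun hst 0
  have e1 : s * (0) + t * (1) = 0 := congrFun hst 1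
  have e2 : s * (4) + t * (21) = 0 := congrFun hst 2
  exact ⟨by linear_combination (1) * e0 + (-6) * e1, by linear_combination (1) * e1⟩

lemma tl_2_6 (w : Fin 3 → ℂ) :
    LinearIndependent ℂ ![grad (comps1 2) w, grad (comps1 6) w] := by
  rw [g2, g6, LinearIndependent.pair_iff]
  intro s t hst
  have e0 : s * (1) + t * (0) = 0 := congrFun hst 0
  have e1 : s * (0) + t * (1) = 0 := congrFun hst 1
  have e2 : s * (4) + t * (3) = 0 := congrFun hst 2
  exact ⟨by linear_combination (1) * e0, by linear_combination (1) * e1⟩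

lemma tl_3_4 (w : Fin 3 → ℂ) :
    LinearIndependent ℂ ![grad (comps1 3) w, grad (comps1 4) w] := by
  rw [g3, g4, LinearIndependent.pair_iff]
  intro s t hst
  have e0 : s * (3) + t * (1) = 0 := congrFun hst 0
  have e1 : s * (4) + t * (0) = 0 := congrFun hst 1
  have e2 : s * (0) + t * (3) = 0 := congrFun hst 2
  exact ⟨by linear_combination (1/4) * e1, by linear_combination (1) * e0 + (-3/4) * e1⟩

lemma tl_3_5 (w : Fin 3 → ℂ) :
    LinearIndependent ℂ ![grad (comps1 3) w, grad (comps1 5) w] := by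
  rw [g3, g5, LinearIndependent.pair_iff]
  intro s t hst
  have e0 : s * (3) + t * (6) = 0 := congrFun hst 0
  have e1 : s * (4) + t * (1) = 0 := congrFun hst 1
  have e2 : s * (0) + t * (21) = 0 := congrFun hst 2
  exact ⟨by linear_combination (-1/21) * e0 + (2/7) * e1, by linear_combination (4/21) * e0 + (-1/7) * e1⟩

lemma tl_3_6 (w : Fin 3 → ℂ) :
    LinearIndependent ℂ ![grad (comps1 3) w, grad (comps1 6) w] := by
  rw [g3, g6, LinearIndependent.pair_iff]
  intro s t hst
  have e0 : s * (3) + t * (0) = 0 := congrFun hst 0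
  have e1 : s * (4) + t * (1) = 0 := congrFun hst 1
  have e2 : s * (0) + t * (3) = 0 := congrFun hst 2
  exact ⟨by linear_combination (1/3) * e0, by linear_combination (-4/3) * e0 + (1) * e1⟩

lemma tl_4_5 (w : Fin 3 → ℂ) :
    LinearIndependent ℂ ![grad (comps1 4) w, grad (comps1 5) w] := by
  rw [g4, g5, LinearIndependent.pair_iff]
  intro s t hst
  have e0 : s * (1) + t * (6) = 0 := congrFun hst 0
  have e1 : s * (0) + t * (1) = 0 := congrFun hst 1
  have e2 : s * (3) + t * (21) = 0 := congrFun hst 2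
  exact ⟨by linear_combination (1) * e0 + (-6) * e1, by linear_combination (1) * e1⟩

lemma tl_4_6 (w : Fin 3 → ℂ) :
    LinearIndependent ℂ ![grad (comps1 4) w, grad (comps1 6) w] := by
  rw [g4, g6, LinearIndependent.pair_iff]
  intro s t hst
  have e0 : s * (1) + t * (0) = 0 := congrFun hst 0
  have e1 : s * (0) + t * (1) = 0 := congrFun hst 1
  have e2 : s * (3) + t * (3) = 0 := congrFun hst 2
  exact ⟨by linear_combination (1) * e0, by linear_combination (1) * e1⟩

lemma tl_5_6 (w : Fin 3 → ℂ) :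
    LinearIndependent ℂ ![grad (comps1 5) w, grad (comps1 6) w] := by
  rw [g5, g6, LinearIndependent.pair_iff]
  intro s t hst
  have e0 : s * (6) + t * (0) = 0 := congrFun hst 0
  have e1 : s * (1) + t * (1) = 0 := congrFun hst 1
  have e2 : s * (21) + t * (3) = 0 := congrFun hst 2
  exact ⟨by linear_combination (1/6) * e0, by linear_combination (-1/6) * e0 + (1) * e1⟩
lemma tl_0_1 (w : Fin 3 → ℂ) (hw : w ≠ 0) (hj : eval w (comps1 1) = 0) :
    LinearIndependent ℂ ![grad (comps1 0) w, grad (comps1 1) w] := by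
  rw [ev1] at hj
  rw [g0, g1, LinearIndependent.pair_iff]
  intro s t hst
  have e0 : s * (2 * w 0) + t * (1) = 0 := congrFun hst 0
  have e1 : s * (2 * w 1) + t * (0) = 0 := congrFun hst 1
  have e2 : s * (-(50 * w 2)) + t * (-4) = 0 := congrFun hst 2
  by_cases hs : s = 0
  · subst hs
    exact ⟨rfl, by linear_combination e0⟩
  · exfalso
    apply hw
    have hy : w 1 = 0 := by
      have h := (mul_eq_zero.1 (show s * (2 * w 1) = 0 by linear_combination e1)).resolve_left hs
      linear_combination h / 2
    have hz : w 2 = 0 := by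
      have h := (mul_eq_zero.1 (show s * (-(8 * w 0) + 50 * w 2) = 0 by
        linear_combination (-4) * e0 - e2)).resolve_left hs
      linear_combination (1/18) * h + (4/9) * hj
    have hx : w 0 = 0 := by linear_combination hj + 4 * hz
    funext k
    obtain rfl | rfl | rfl := fin3_cases k
    · simpa using hx
    · simpa using hy
    · simpa using hz

lemma tl_0_2 (w : Fin 3 → ℂ) (hw : w ≠ 0) (hj : eval w (comps1 2) = 0) :
    LinearIndependent ℂ ![grad (comps1 0) w, grad (comps1 2) w] := by
  rw [ev2] at hj
  rw [g0, g2, LinearIndependent.pair_iff]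
  intro s t hst
  have e0 : s * (2 * w 0) + t * (1) = 0 := congrFun hst 0
  have e1 : s * (2 * w 1) + t * (0) = 0 := congrFun hst 1
  have e2 : s * (-(50 * w 2)) + t * (4) = 0 := congrFun hst 2
  by_cases hs : s = 0
  · subst hs
    exact ⟨rfl, by linear_combination e0⟩
  · exfalso
    apply hw
    have hy : w 1 = 0 := by
      have h := (mul_eq_zero.1 (show s * (2 * w 1) = 0 by linear_combination e1)).resolve_left hs
      linear_combination h / 2
    have hz : w 2 = 0 := by
      have h := (mul_eq_zero.1 (show s * (8 * w 0 + 50 * w 2) = 0 by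
        linear_combination 4 * e0 - e2)).resolve_left hs
      linear_combination (1/18) * h - (4/9) * hj
    have hx : w 0 = 0 := by linear_combination hj - 4 * hz
    funext k
    obtain rfl | rfl | rfl := fin3_cases k
    · simpa using hx
    · simpa using hy
    · simpa using hz

lemma tl_0_3 (w : Fin 3 → ℂ) (hw : w ≠ 0) (hj : eval w (comps1 3) = 0) :
    LinearIndependent ℂ ![grad (comps1 0) w, grad (comps1 3) w] := by
  rw [ev3] at hj
  rw [g0, g3, LinearIndependent.pair_iff]
  intro s t hst
  have e0 : s * (2 * w 0) + t * (3) = 0 := congrFun hst 0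
  have e1 : s * (2 * w 1) + t * (4) = 0 := congrFun hst 1
  have e2 : s * (-(50 * w 2)) + t * (0) = 0 := congrFun hst 2
  by_cases hs : s = 0
  · subst hs
    exact ⟨rfl, by linear_combination e0 / 3⟩
  · exfalso
    apply hw
    have hz : w 2 = 0 := by
      have h := (mul_eq_zero.1 (show s * (50 * w 2) = 0 by
        linear_combination -e2)).resolve_left hs
      linear_combination h / 50
    have h8 := (mul_eq_zero.1 (show s * (8 * w 0 - 6 * w 1) = 0 by
      linear_combination 4 * e0 - 3 * e1)).resolve_left hs
    have hx : w 0 = 0 := by linear_combination (2/25) * h8 + (3/25) * hj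
    have hy : w 1 = 0 := by linear_combination (-3/50) * h8 + (4/25) * hj
    funext k
    obtain rfl | rfl | rfl := fin3_cases k
    · simpa using hx
    · simpa using hy
    · simpa using hz

lemma tl_0_4 (w : Fin 3 → ℂ) (hw : w ≠ 0) (hj : eval w (comps1 4) = 0) :
    LinearIndependent ℂ ![grad (comps1 0) w, grad (comps1 4) w] := by
  rw [ev4] at hj
  rw [g0, g4, LinearIndependent.pair_iff]
  intro s t hst
  have e0 : s * (2 * w 0) + t * (1) = 0 := congrFun hst 0
  have e1 : s * (2 * w 1) + t * (0) = 0 := congrFun hst 1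
  have e2 : s * (-(50 * w 2)) + t * (3) = 0 := congrFun hst 2
  by_cases hs : s = 0
  · subst hs
    exact ⟨rfl, by linear_combination e0⟩
  · exfalso
    apply hw
    have hy : w 1 = 0 := by
      have h := (mul_eq_zero.1 (show s * (2 * w 1) = 0 by linear_combination e1)).resolve_left hs
      linear_combination h / 2
    have hz : w 2 = 0 := by
      have h := (mul_eq_zero.1 (show s * (6 * w 0 + 50 * w 2) = 0 by
        linear_combination 3 * e0 - e2)).resolve_left hs
      linear_combination (1/32) * h - (3/16) * hj
    have hx : w 0 = 0 := by linear_combination hj - 3 * hz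
    funext k
    obtain rfl | rfl | rfl := fin3_cases k
    · simpa using hx
    · simpa using hy
    · simpa using hz

lemma tl_0_5 (w : Fin 3 → ℂ) (hw : w ≠ 0) (hj : eval w (comps1 5) = 0) :
    LinearIndependent ℂ ![grad (comps1 0) w, grad (comps1 5) w] := by
  rw [ev5] at hj
  rw [g0, g5, LinearIndependent.pair_iff]
  intro s t hst
  have e0 : s * (2 * w 0) + t * (6) = 0 := congrFun hst 0
  have e1 : s * (2 * w 1) + t * (1) = 0 := congrFun hst 1
  have e2 : s * (-(50 * w 2)) + t * (21) = 0 := congrFun hst 2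
  by_cases hs : s = 0
  · subst hs
    exact ⟨rfl, by linear_combination e1⟩
  · exfalso
    apply hw
    have h1 := (mul_eq_zero.1 (show s * (2 * w 0 - 12 * w 1) = 0 by
      linear_combination e0 - 6 * e1)).resolve_left hs
    have h2 := (mul_eq_zero.1 (show s * (42 * w 1 + 50 * w 2) = 0 by
      linear_combination 21 * e1 - e2)).resolve_left hs
    have hy : w 1 = 0 := by
      linear_combination (-75/484) * h1 + (-21/968) * h2 + (25/484) * hj
    have hx : w 0 = 0 := by linear_combination (1/2) * h1 + 6 * hy
    have hz : w 2 = 0 := by linear_combination (1/50) * h2 - (42/50) * hy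
    funext k
    obtain rfl | rfl | rfl := fin3_cases k
    · simpa using hx
    · simpa using hy
    · simpa using hz

lemma tl_0_6 (w : Fin 3 → ℂ) (hw : w ≠ 0) (hj : eval w (comps1 6) = 0) :
    LinearIndependent ℂ ![grad (comps1 0) w, grad (comps1 6) w] := by
  rw [ev6] at hj
  rw [g0, g6, LinearIndependent.pair_iff]
  intro s t hst
  have e0 : s * (2 * w 0) + t * (0) = 0 := congrFun hst 0
  have e1 : s * (2 * w 1) + t * (1) = 0 := congrFun hst 1
  have e2 : s * (-(50 * w 2)) + t * (3) = 0 := congrFun hst 2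
  by_cases hs : s = 0
  · subst hs
    exact ⟨rfl, by linear_combination e1⟩
  · exfalso
    apply hw
    have hx : w 0 = 0 := by
      have h := (mul_eq_zero.1 (show s * (2 * w 0) = 0 by linear_combination e0)).resolve_left hs
      linear_combination h / 2
    have hz : w 2 = 0 := by
      have h := (mul_eq_zero.1 (show s * (6 * w 1 + 50 * w 2) = 0 by
        linear_combination 3 * e1 - e2)).resolve_left hs
      linear_combination (1/32) * h - (3/16) * hj
    have hy : w 1 = 0 := by linear_combination hj - 3 * hz
    funext k
    obtain rfl | rfl | rfl := fin3_cases k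
    · simpa using hx
    · simpa using hy
    · simpa using hz
lemma trans_main (w : Fin 3 → ℂ) (hw : w ≠ 0) (i j : Fin 7) (hij : i ≠ j)
    (hi : eval w (comps1 i) = 0) (hj : eval w (comps1 j) = 0) :
    LinearIndependent ℂ ![grad (comps1 i) w, grad (comps1 j) w] := by
  obtain rfl | rfl | rfl | rfl | rfl | rfl | rfl := fin7_cases i <;>
    obtain rfl | rfl | rfl | rfl | rfl | rfl | rfl := fin7_cases j
  · exact absurd rfl hij
  · exact tl_0_1 w hw hj
  · exact tl_0_2 w hw hj
  · exact tl_0_3 w hw hj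
  · exact tl_0_4 w hw hj
  · exact tl_0_5 w hw hj
  · exact tl_0_6 w hw hj
  · exact li_swap (tl_0_1 w hw hi)
  · exact absurd rfl hij
  · exact tl_1_2 w
  · exact tl_1_3 w
  · exact tl_1_4 w
  · exact tl_1_5 w
  · exact tl_1_6 w
  · exact li_swap (tl_0_2 w hw hi)
  · exact li_swap (tl_1_2 w)
  · exact absurd rfl hij
  · exact tl_2_3 w
  · exact tl_2_4 w
  · exact tl_2_5 w
  · exact tl_2_6 w
  · exact li_swap (tl_0_3 w hw hi)
  · exact li_swap (tl_1_3 w)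
  · exact li_swap (tl_2_3 w)
  · exact absurd rfl hij
  · exact tl_3_4 w
  · exact tl_3_5 w
  · exact tl_3_6 w
  · exact li_swap (tl_0_4 w hw hi)
  · exact li_swap (tl_1_4 w)
  · exact li_swap (tl_2_4 w)
  · exact li_swap (tl_3_4 w)
  · exact absurd rfl hij
  · exact tl_4_5 w
  · exact tl_4_6 w
  · exact li_swap (tl_0_5 w hw hi)
  · exact li_swap (tl_1_5 w)
  · exact li_swap (tl_2_5 w)
  · exact li_swap (tl_3_5 w)
  · exact li_swap (tl_4_5 w)
  · exact absurd rfl hij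
  · exact tl_5_6 w
  · exact li_swap (tl_0_6 w hw hi)
  · exact li_swap (tl_1_6 w)
  · exact li_swap (tl_2_6 w)
  · exact li_swap (tl_3_6 w)
  · exact li_swap (tl_4_6 w)
  · exact li_swap (tl_5_6 w)
  · exact absurd rfl hij

/-- CL1 has exactly 6 ordinary double points, 3 ordinary triple points, 2 ordinary
quadruple points, and no singular point of multiplicity at least 5; moreover any two
components meet transversally at every common point. -/
theorem stmt_12 :
    {p : Projectivization ℂ (Fin 3 → ℂ) | mult1 p = 2}.ncard = 6 ∧
    {p : Projectivization ℂ (Fin 3 → ℂ) | mult1 p = 3}.ncard = 3 ∧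
    {p : Projectivization ℂ (Fin 3 → ℂ) | mult1 p = 4}.ncard = 2 ∧
    (∀ p : Projectivization ℂ (Fin 3 → ℂ), mult1 p ≤ 4) ∧
    (∀ p : Projectivization ℂ (Fin 3 → ℂ), ∀ i j : Fin 7, i ≠ j →
      eval p.rep (comps1 i) = 0 → eval p.rep (comps1 j) = 0 →
      LinearIndependent ℂ ![grad (comps1 i) p.rep, grad (comps1 j) p.rep]) := by
  refine ⟨?_, ?_, ?_, ?_, ?_⟩
  · rw [set2]; exact ncard2
  · rw [set3]; exact ncard3
  · rw [set4]; exact ncard4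
  · intro p
    by_contra hle
    push_neg at hle
    obtain ⟨k, hk⟩ := mem11 p (by omega)
    rw [hk] at hle
    obtain rfl | rfl | rfl | rfl | rfl | rfl | rfl | rfl | rfl | rfl | rfl := fin11_cases k <;>
      simp only [m0, m1, m2, m3, m4, m5, m6, m7, m8, m9, m10] at hle <;> omega
  · intro p i j hij hi hj
    exact trans_main p.rep (Projectivization.rep_nonzero p) i j hij hi hj
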